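/- Let p and d be natural numbers, let X ⊂ ℝ^d be compact, let e be an MPLang expression appropriate for input arity d, and let ε > 0. Then there exists a ReLU-MPNN N of type d → 1 such that |e(G)(χ)(v) − N(G)(χ)(v)| ≤ ε for every graph G ∈ 𝔾_p, every d-dimensional feature map χ on G with image contained in X, and every node v of G. -/

import Mathlib

open scoped BigOperators

/-- A finite graph: nodes `Fin n`, with a symmetric, irreflexive adjacency relation. -/
structure FinGraph where
  n : ℕ
  adj : Fin n → Fin n → Bool
  symm : ∀ u v, adj u v = adj v u
  irrefl : ∀ v, adj v v = false

namespace FinGraph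

/-- The set of neighbors of `v` in `G`. -/
def neighbors (G : FinGraph) (v : Fin G.n) : Finset (Fin G.n) :=
  Finset.univ.filter fun u => G.adj v u

/-- The degree of a node. -/
def degree (G : FinGraph) (v : Fin G.n) : ℕ := (G.neighbors v).card

/-- `G` has degree at most `p` (i.e., `G ∈ 𝔾_p`). -/
def DegreeLE (G : FinGraph) (p : ℕ) : Prop := ∀ v, G.degree v ≤ p

end FinGraph

/-- The rectified linear unit. -/
noncomputable def ReLU (x : ℝ) : ℝ := max 0 x

/-- An MPNN layer of type `d → r`: matrices `W₁, W₂ ∈ ℝ^{r×d}`, bias `b ∈ ℝ^r`,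
and a continuous activation function `σ`. -/
structure Layer (d r : ℕ) where
  W₁ : Matrix (Fin r) (Fin d) ℝ
  W₂ : Matrix (Fin r) (Fin d) ℝ
  b : Fin r → ℝ
  σ : ℝ → ℝ
  hσ : Continuous σ

namespace Layer

/-- The GFMT defined by a layer:
`L(G)(χ)(v) = σ(W₁ χ(v) + W₂ Σ_{u ∈ N_G(v)} χ(u) + b)`, componentwise. -/
noncomputable def eval {d r : ℕ} (L : Layer d r) (G : FinGraph)
    (χ : Fin G.n → Fin d → ℝ) (v : Fin G.n) : Fin r → ℝ :=
  fun i => L.σ (L.W₁.mulVec (χ v) i + L.W₂.mulVec (∑ u ∈ G.neighbors v, χ u) i + L.b i)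

end Layer

/-- An MPNN: a nonempty sequence of layers with matching arities. -/
inductive MPNN : ℕ → ℕ → Type where
  | single {d r : ℕ} : Layer d r → MPNN d r
  | cons {d m r : ℕ} : Layer d m → MPNN m r → MPNN d r

namespace MPNN

/-- The GFMT defined by an MPNN: the sequential composition of its layers. -/
noncomputable def eval : {d r : ℕ} → MPNN d r → (G : FinGraph) →
    (Fin G.n → Fin d → ℝ) → (Fin G.n → Fin r → ℝ)
  | _, _, .single L, G, χ => L.eval G χ
  | _, _, .cons L N, G, χ => N.eval G (L.eval G χ)

/-- A ReLU-MPNN: every layer uses ReLU, except that the last layer may use the identity. -/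
def IsReLU : {d r : ℕ} → MPNN d r → Prop
  | _, _, .single L => L.σ = ReLU ∨ L.σ = id
  | _, _, .cons L N => L.σ = ReLU ∧ N.IsReLU

/-- The set of activation functions used in the layers of an MPNN. -/
def activations : {d r : ℕ} → MPNN d r → Set (ℝ → ℝ)
  | _, _, .single L => {L.σ}
  | _, _, .cons L N => insert L.σ N.activations

/-- The number of layers of an MPNN. -/
def numLayers : {d r : ℕ} → MPNN d r → ℕ
  | _, _, .single _ => 1
  | _, _, .cons _ N => N.numLayers + 1

end MPNN

/-- MPLang expressions: `e ::= 1 | P_i | a·e | e + e | f(e) | ◇e`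
with `f : ℝ → ℝ` continuous. -/
inductive MPLang : Type where
  | one : MPLang
  | proj : ℕ → MPLang
  | scale : ℝ → MPLang → MPLang
  | add : MPLang → MPLang → MPLang
  | app : (f : ℝ → ℝ) → Continuous f → MPLang → MPLang
  | diamond : MPLang → MPLang

namespace MPLang

/-- `e` is appropriate for input arity `d`: every `P_i` has `1 ≤ i ≤ d`. -/
def Appropriate (d : ℕ) : MPLang → Prop
  | .one => True
  | .proj i => 1 ≤ i ∧ i ≤ d
  | .scale _ e => e.Appropriate d
  | .add e₁ e₂ => e₁.Appropriate d ∧ e₂.Appropriate d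
  | .app _ _ e => e.Appropriate d
  | .diamond e => e.Appropriate d

/-- Semantics of MPLang expressions (the `P_i` are 1-based; out-of-range
projections, which cannot occur in expressions appropriate for `d`, yield 0). -/
noncomputable def eval (d : ℕ) : MPLang → (G : FinGraph) →
    (Fin G.n → Fin d → ℝ) → Fin G.n → ℝ
  | .one, _, _, _ => 1
  | .proj i, _, χ, v => if h : i - 1 < d then χ v ⟨i - 1, h⟩ else 0
  | .scale a e, G, χ, v => a * e.eval d G χ v
  | .add e₁ e₂, G, χ, v => e₁.eval d G χ v + e₂.eval d G χ v
  | .app f _ e, G, χ, v => f (e.eval d G χ v)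
  | .diamond e, G, χ, v => ∑ u ∈ G.neighbors v, e.eval d G χ u

/-- All function applications in the expression apply functions from `F`. -/
def AppsIn (F : Set (ℝ → ℝ)) : MPLang → Prop
  | .one => True
  | .proj _ => True
  | .scale _ e => e.AppsIn F
  | .add e₁ e₂ => e₁.AppsIn F ∧ e₂.AppsIn F
  | .app f _ e => f ∈ F ∧ e.AppsIn F
  | .diamond e => e.AppsIn F

/-- A ReLU-MPLang expression: all function applications apply ReLU. -/
def IsReLU (e : MPLang) : Prop := e.AppsIn {ReLU}

end MPLang


lemma relu_nonneg (x : ℝ) : 0 ≤ ReLU x := le_max_left _ _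
lemma relu_of_nonneg {x : ℝ} (h : 0 ≤ x) : ReLU x = x := max_eq_right h
lemma relu_of_nonpos {x : ℝ} (h : x ≤ 0) : ReLU x = 0 := max_eq_left h
lemma continuous_relu : Continuous ReLU := continuous_const.max continuous_id
lemma relu_sub_relu_neg (x : ℝ) : ReLU x - ReLU (-x) = x := by
  rcases le_total 0 x with h | h
  · rw [relu_of_nonneg h, relu_of_nonpos (by linarith), sub_zero]
  · rw [relu_of_nonpos h, relu_of_nonneg (by linarith)]; ring

lemma pl_approx (f : ℝ → ℝ) (hf : Continuous f) (B : ℝ) (hB : 0 < B) (ε : ℝ) (hε : 0 < ε) :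
    ∃ (m : ℕ) (c : ℝ) (a t : Fin m → ℝ),
      ∀ x ∈ Set.Icc (-B) B, |f x - (c + ∑ i, a i * ReLU (x - t i))| ≤ ε := by
  obtain ⟨θ, hθ0, hθ⟩ := Metric.uniformContinuousOn_iff.mp
    ((isCompact_Icc (a := -B) (b := B)).uniformContinuousOn_of_continuous hf.continuousOn)
    (ε/2) (by linarith)
  set n : ℕ := ⌊2*B/θ⌋₊ + 1 with hn
  have hn0 : 0 < n := Nat.succ_pos _
  set η : ℝ := 2*B/n with hη
  have hη0 : 0 < η := by positivity
  have hηθ : η < θ := by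
    rw [hη, div_lt_iff₀ (by positivity)]
    have h1 : 2*B/θ < n := by
      have := Nat.lt_floor_add_one (2*B/θ)
      push_cast [hn]; linarith
    have h2 : (2*B/θ)*θ < n*θ := by nlinarith
    have h3 : (2*B/θ)*θ = 2*B := by field_simp
    linarith
  set t : ℕ → ℝ := fun i => -B + i * η with ht
  set sl : ℕ → ℝ := fun i => (f (t (i+1)) - f (t i)) / η with hsl
  have htstep : ∀ i : ℕ, t (i+1) - t i = η := by intro i; simp only [ht]; push_cast; ring
  have htmono : ∀ {i k : ℕ}, i ≤ k → t i ≤ t k := by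
    intro i k h
    simp only [ht]
    have : (i:ℝ) ≤ k := Nat.cast_le.mpr h
    nlinarith
  have htn : t n = B := by
    simp only [ht, hη]; field_simp; ring
  refine ⟨n + n, f (t 0), Fin.append (fun i : Fin n => sl i) (fun i : Fin n => -sl i),
    Fin.append (fun i : Fin n => t i) (fun i : Fin n => t (i+1)), ?_⟩
  intro x hx
  have hsum : (∑ i : Fin (n+n), Fin.append (fun i : Fin n => sl i) (fun i : Fin n => -sl i) i *
        ReLU (x - Fin.append (fun i : Fin n => t i) (fun i : Fin n => t (i+1)) i))
      = ∑ i ∈ Finset.range n, sl i * (ReLU (x - t i) - ReLU (x - t (i+1))) := by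
    rw [Fin.sum_univ_add]
    simp only [Fin.append_left, Fin.append_right]
    rw [← Finset.sum_add_distrib, ← Fin.sum_univ_eq_sum_range]
    apply Finset.sum_congr rfl
    intro i _
    ring
  set j : ℕ := min (n-1) ⌊(x+B)/η⌋₊ with hj
  have hjn : j < n := lt_of_le_of_lt (min_le_left _ _) (Nat.sub_lt hn0 one_pos)
  have htj : t j ≤ x := by
    have h1 : (j:ℝ) ≤ (x+B)/η :=
      le_trans (Nat.cast_le.mpr (min_le_right _ _)) (Nat.floor_le (div_nonneg (by linarith [hx.1]) hη0.le))
    have h2 := (le_div_iff₀ hη0).mp h1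
    simp only [ht]; linarith
  have htj1 : x ≤ t (j+1) := by
    rcases lt_or_ge (n-1) ⌊(x+B)/η⌋₊ with h | h
    · have hj' : j + 1 = n := by omega
      rw [hj']; rw [htn]; exact hx.2
    · have hj' : j = ⌊(x+B)/η⌋₊ := min_eq_right h
      have h2 : (x+B)/η < (j:ℝ) + 1 := by
        have := Nat.lt_floor_add_one ((x+B)/η)
        rw [hj']; push_cast; linarith
      have h3 := (div_lt_iff₀ hη0).mp h2
      simp only [ht]; push_cast; linarith
  have key : ∑ i ∈ Finset.range n, sl i * (ReLU (x - t i) - ReLU (x - t (i+1)))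
      = (f (t j) - f (t 0)) + sl j * (x - t j) := by
    have hsplit : ∑ i ∈ Finset.range n, sl i * (ReLU (x - t i) - ReLU (x - t (i+1)))
        = ∑ i ∈ Finset.range (j+1), sl i * (ReLU (x - t i) - ReLU (x - t (i+1))) := by
      apply (Finset.sum_subset (Finset.range_subset_range.mpr (by omega)) ?_).symm
      intro i hi hni
      rw [Finset.mem_range] at hi hni
      have hij : j + 1 ≤ i := by omega
      have h1 : x - t i ≤ 0 := by have := htmono hij; linarith
      have h2 : x - t (i+1) ≤ 0 := by have := htmono (Nat.le_succ_of_le hij); linarith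
      rw [relu_of_nonpos h1, relu_of_nonpos h2]; ring
    rw [hsplit, Finset.sum_range_succ]
    congr 1
    · rw [← Finset.sum_range_sub (fun i => f (t i)) j]
      apply Finset.sum_congr rfl
      intro i hi
      rw [Finset.mem_range] at hi
      have h1 : 0 ≤ x - t i := by have := htmono hi.le; linarith
      have h2 : 0 ≤ x - t (i+1) := by have := htmono (show i+1 ≤ j by omega); linarith
      rw [relu_of_nonneg h1, relu_of_nonneg h2]
      have h3 : x - t i - (x - t (i + 1)) = η := by have := htstep i; linarith
      rw [h3, hsl, div_mul_cancel₀ _ hη0.ne']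
    · rw [relu_of_nonneg (by linarith), relu_of_nonpos (by linarith), sub_zero]
  rw [hsum, key]
  have htjIcc : t j ∈ Set.Icc (-B) B := by
    constructor
    · simp only [ht]
      have : (0:ℝ) ≤ (j:ℝ) * η := by positivity
      linarith
    · linarith [htj, hx.2]
  have htj1Icc : t (j+1) ∈ Set.Icc (-B) B := by
    constructor
    · have : t 0 ≤ t (j+1) := htmono (Nat.zero_le _)
      simp only [ht] at this ⊢
      push_cast at this ⊢
      linarith
    · have := htmono (show j+1 ≤ n by omega)
      rw [htn] at this; exact this
  have hd1 : dist x (t j) < θ := by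
    rw [Real.dist_eq, abs_of_nonneg (by linarith)]
    linarith [htstep j]
  have h1 : |f x - f (t j)| ≤ ε/2 := by
    have := hθ x hx (t j) htjIcc hd1
    rw [Real.dist_eq] at this; linarith
  have h2 : |sl j * (x - t j)| ≤ ε/2 := by
    have hd2 : dist (t (j+1)) (t j) < θ := by
      rw [Real.dist_eq, abs_of_nonneg (by linarith [htstep j])]
      linarith [htstep j]
    have hf2 : |f (t (j+1)) - f (t j)| < ε/2 := by
      have := hθ (t (j+1)) htj1Icc (t j) htjIcc hd2
      rwa [Real.dist_eq] at this
    rw [abs_mul, hsl, abs_div, abs_of_pos hη0]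
    have hxj : |x - t j| ≤ η := by
      rw [abs_of_nonneg (by linarith)]; linarith [htstep j]
    calc |f (t (j+1)) - f (t j)| / η * |x - t j| ≤ |f (t (j+1)) - f (t j)| / η * η := by
          apply mul_le_mul_of_nonneg_left hxj (by positivity)
      _ = |f (t (j+1)) - f (t j)| := by field_simp
      _ ≤ ε/2 := hf2.le
  have heq : f x - (f (t 0) + (f (t j) - f (t 0) + sl j * (x - t j)))
      = (f x - f (t j)) - sl j * (x - t j) := by ring
  rw [heq]
  calc |f x - f (t j) - sl j * (x - t j)| ≤ |f x - f (t j)| + |sl j * (x - t j)| := abs_sub _ _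
    _ ≤ ε := by linarith


section Plumbing
open MPNN

/-- all layers use ReLU (including the last). -/
def MPNN.AllReLU : {d r : ℕ} → MPNN d r → Prop
  | _, _, .single L => L.σ = ReLU
  | _, _, .cons L N => L.σ = ReLU ∧ N.AllReLU

lemma MPNN.AllReLU.isReLU : ∀ {d r : ℕ} (N : MPNN d r), N.AllReLU → N.IsReLU
  | _, _, .single _, h => Or.inl h
  | _, _, .cons _ N, h => ⟨h.1, (h.2 : N.AllReLU).isReLU N⟩

/-- append a layer at the end of an MPNN. -/
def MPNN.snoc : {d m : ℕ} → MPNN d m → {r : ℕ} → Layer m r → MPNN d r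
  | _, _, .single L₀, _, L => .cons L₀ (.single L)
  | _, _, .cons L₀ N, _, L => .cons L₀ (N.snoc L)

lemma MPNN.eval_snoc : ∀ {d m r : ℕ} (N : MPNN d m) (L : Layer m r) (G : FinGraph)
    (χ : Fin G.n → Fin d → ℝ), (N.snoc L).eval G χ = L.eval G (N.eval G χ)
  | _, _, _, .single L₀, L, G, χ => rfl
  | _, _, _, .cons L₀ N, L, G, χ => by
      show (N.snoc L).eval G (L₀.eval G χ) = _
      rw [MPNN.eval_snoc N L G (L₀.eval G χ)]; rfl

lemma MPNN.allReLU_snoc : ∀ {d m r : ℕ} (N : MPNN d m) (L : Layer m r),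
    N.AllReLU → L.σ = ReLU → (N.snoc L).AllReLU
  | _, _, _, .single L₀, L, h, hL => ⟨h, hL⟩
  | _, _, _, .cons L₀ N, L, h, hL => ⟨h.1, MPNN.allReLU_snoc N L h.2 hL⟩

lemma MPNN.isReLU_snoc : ∀ {d m r : ℕ} (N : MPNN d m) (L : Layer m r),
    N.AllReLU → (L.σ = ReLU ∨ L.σ = id) → (N.snoc L).IsReLU
  | _, _, _, .single L₀, L, h, hL => ⟨h, hL⟩
  | _, _, _, .cons L₀ N, L, h, hL => ⟨h.1, MPNN.isReLU_snoc N L h.2 hL⟩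

lemma MPNN.one_le_numLayers : ∀ {d r : ℕ} (N : MPNN d r), 1 ≤ N.numLayers
  | _, _, .single _ => le_refl _
  | _, _, .cons _ N => by simp [MPNN.numLayers]

lemma MPNN.numLayers_snoc : ∀ {d m r : ℕ} (N : MPNN d m) (L : Layer m r),
    (N.snoc L).numLayers = N.numLayers + 1
  | _, _, _, .single L₀, L => rfl
  | _, _, _, .cons L₀ N, L => by
      show (N.snoc L).numLayers + 1 = N.numLayers + 1 + 1
      rw [MPNN.numLayers_snoc]

lemma MPNN.eval_nonneg : ∀ {d r : ℕ} (N : MPNN d r), N.AllReLU → ∀ (G : FinGraph)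
    (χ : Fin G.n → Fin d → ℝ) (v : Fin G.n) (i : Fin r), 0 ≤ N.eval G χ v i
  | _, _, .single L, h, G, χ, v, i => by
      show 0 ≤ L.σ _
      rw [h]; exact relu_nonneg _
  | _, _, .cons L N, h, G, χ, v, i =>
      MPNN.eval_nonneg N h.2 G (L.eval G χ) v i

/-- the identity-on-nonnegatives ReLU layer. -/
noncomputable def idLayer (m : ℕ) : Layer m m :=
  ⟨1, 0, 0, ReLU, continuous_relu⟩

lemma idLayer_eval {m : ℕ} (G : FinGraph) (χ : Fin G.n → Fin m → ℝ)
    (h : ∀ v i, 0 ≤ χ v i) (v : Fin G.n) (i : Fin m) :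
    (idLayer m).eval G χ v i = χ v i := by
  simp [idLayer, Layer.eval, Matrix.one_mulVec, Matrix.zero_mulVec, relu_of_nonneg (h v i)]

/-- padding to any larger depth. -/
lemma MPNN.pad {d r : ℕ} (N : MPNN d r) (h : N.AllReLU) (k : ℕ) (hk : N.numLayers ≤ k) :
    ∃ N' : MPNN d r, N'.AllReLU ∧ N'.numLayers = k ∧
      ∀ (G : FinGraph) (χ : Fin G.n → Fin d → ℝ), N'.eval G χ = N.eval G χ := by
  obtain ⟨j, rfl⟩ := Nat.exists_eq_add_of_le hk
  induction j with
  | zero => exact ⟨N, h, rfl, fun _ _ => rfl⟩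
  | succ j ih =>
    obtain ⟨N', h1, h2, h3⟩ := ih (by omega)
    refine ⟨N'.snoc (idLayer r), N'.allReLU_snoc _ h1 rfl, by rw [MPNN.numLayers_snoc, h2]; omega, ?_⟩
    intro G χ
    rw [MPNN.eval_snoc, h3]
    funext v i
    exact idLayer_eval G _ (fun v i => N.eval_nonneg h G χ v i) v i

end Plumbing


section Zip
variable {d₁ m₁ d₂ m₂ d : ℕ}

/-- block-diagonal combination of two layers (with ReLU activation). -/
noncomputable def splitLayer (L₁ : Layer d₁ m₁) (L₂ : Layer d₂ m₂) : Layer (d₁+d₂) (m₁+m₂) where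
  W₁ := Matrix.of (Fin.addCases (fun i₁ => Fin.append (L₁.W₁ i₁) (0 : Fin d₂ → ℝ)) (fun i₂ => Fin.append (0 : Fin d₁ → ℝ) (L₂.W₁ i₂)))
  W₂ := Matrix.of (Fin.addCases (fun i₁ => Fin.append (L₁.W₂ i₁) (0 : Fin d₂ → ℝ)) (fun i₂ => Fin.append (0 : Fin d₁ → ℝ) (L₂.W₂ i₂)))
  b := Fin.append L₁.b L₂.b
  σ := ReLU
  hσ := continuous_relu

/-- row-stacked combination of two layers with common input (ReLU activation). -/
noncomputable def stackLayer (L₁ : Layer d m₁) (L₂ : Layer d m₂) : Layer d (m₁+m₂) where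
  W₁ := Matrix.of (Fin.addCases (fun i₁ => L₁.W₁ i₁) (fun i₂ => L₂.W₁ i₂))
  W₂ := Matrix.of (Fin.addCases (fun i₁ => L₁.W₂ i₁) (fun i₂ => L₂.W₂ i₂))
  b := Fin.append L₁.b L₂.b
  σ := ReLU
  hσ := continuous_relu

lemma dot_append_left (w : Fin d₁ → ℝ) (v₁ : Fin d₁ → ℝ) (v₂ : Fin d₂ → ℝ) :
    ∑ j : Fin (d₁+d₂), Fin.append w 0 j * Fin.append v₁ v₂ j = ∑ j : Fin d₁, w j * v₁ j := by
  rw [Fin.sum_univ_add]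
  simp [Fin.append_left, Fin.append_right]

lemma dot_append_right (w : Fin d₂ → ℝ) (v₁ : Fin d₁ → ℝ) (v₂ : Fin d₂ → ℝ) :
    ∑ j : Fin (d₁+d₂), Fin.append (0 : Fin d₁ → ℝ) w j * Fin.append v₁ v₂ j = ∑ j : Fin d₂, w j * v₂ j := by
  rw [Fin.sum_univ_add]
  simp [Fin.append_left, Fin.append_right]

lemma sum_append {α : Type*} (s : Finset α) (f : α → Fin d₁ → ℝ) (g : α → Fin d₂ → ℝ) :
    (∑ u ∈ s, Fin.append (f u) (g u)) = Fin.append (∑ u ∈ s, f u) (∑ u ∈ s, g u) := by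
  funext j
  induction j using Fin.addCases with
  | left j => simp [Finset.sum_apply, Fin.append_left]
  | right j => simp [Finset.sum_apply, Fin.append_right]

lemma splitLayer_eval (L₁ : Layer d₁ m₁) (L₂ : Layer d₂ m₂) (hσ₁ : L₁.σ = ReLU)
    (hσ₂ : L₂.σ = ReLU) (G : FinGraph) (χ₁ : Fin G.n → Fin d₁ → ℝ) (χ₂ : Fin G.n → Fin d₂ → ℝ)
    (v : Fin G.n) :
    (splitLayer L₁ L₂).eval G (fun u => Fin.append (χ₁ u) (χ₂ u)) v
      = Fin.append (L₁.eval G χ₁ v) (L₂.eval G χ₂ v) := by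
  funext i
  induction i using Fin.addCases with
  | left i =>
    rw [Fin.append_left]
    simp only [Layer.eval, splitLayer, Matrix.mulVec, dotProduct, Matrix.of_apply,
      Fin.addCases_left, Fin.append_left, sum_append, hσ₁]
    rw [dot_append_left, dot_append_left]
  | right i =>
    rw [Fin.append_right]
    simp only [Layer.eval, splitLayer, Matrix.mulVec, dotProduct, Matrix.of_apply,
      Fin.addCases_right, Fin.append_right, sum_append, hσ₂]
    rw [dot_append_right, dot_append_right]

lemma stackLayer_eval (L₁ : Layer d m₁) (L₂ : Layer d m₂) (hσ₁ : L₁.σ = ReLU)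
    (hσ₂ : L₂.σ = ReLU) (G : FinGraph) (χ : Fin G.n → Fin d → ℝ) (v : Fin G.n) :
    (stackLayer L₁ L₂).eval G χ v = Fin.append (L₁.eval G χ v) (L₂.eval G χ v) := by
  funext i
  induction i using Fin.addCases with
  | left i =>
    rw [Fin.append_left]
    simp only [Layer.eval, stackLayer, Matrix.mulVec, dotProduct, Matrix.of_apply,
      Fin.addCases_left, Fin.append_left, hσ₁]
  | right i =>
    rw [Fin.append_right]
    simp only [Layer.eval, stackLayer, Matrix.mulVec, dotProduct, Matrix.of_apply,
      Fin.addCases_right, Fin.append_right, hσ₂]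

lemma zipSplit : ∀ {d₁ r₁ : ℕ} (N₁ : MPNN d₁ r₁) {d₂ r₂ : ℕ} (N₂ : MPNN d₂ r₂),
    N₁.AllReLU → N₂.AllReLU → N₁.numLayers = N₂.numLayers →
    ∃ N : MPNN (d₁+d₂) (r₁+r₂), N.AllReLU ∧
      ∀ (G : FinGraph) (χ₁ : Fin G.n → Fin d₁ → ℝ) (χ₂ : Fin G.n → Fin d₂ → ℝ),
        N.eval G (fun u => Fin.append (χ₁ u) (χ₂ u))
          = fun v => Fin.append (N₁.eval G χ₁ v) (N₂.eval G χ₂ v)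
  | _, _, .single L₁, _, _, N₂, h₁, h₂, hn => by
    cases N₂ with
    | single L₂ =>
      refine ⟨.single (splitLayer L₁ L₂), rfl, ?_⟩
      intro G χ₁ χ₂
      funext v
      exact splitLayer_eval L₁ L₂ h₁ h₂ G χ₁ χ₂ v
    | cons L₂ M₂ =>
      exfalso
      have := M₂.one_le_numLayers
      simp [MPNN.numLayers] at hn
      omega
  | _, _, .cons L₁ M₁, _, _, N₂, h₁, h₂, hn => by
    cases N₂ with
    | single L₂ =>
      exfalso
      have := M₁.one_le_numLayers
      simp [MPNN.numLayers] at hn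
      omega
    | cons L₂ M₂ =>
      obtain ⟨M, hM, hMe⟩ := zipSplit M₁ M₂ h₁.2 h₂.2 (by
        simp [MPNN.numLayers] at hn; omega)
      refine ⟨.cons (splitLayer L₁ L₂) M, ⟨rfl, hM⟩, ?_⟩
      intro G χ₁ χ₂
      show M.eval G ((splitLayer L₁ L₂).eval G (fun u => Fin.append (χ₁ u) (χ₂ u))) = _
      have hl : (splitLayer L₁ L₂).eval G (fun u => Fin.append (χ₁ u) (χ₂ u))
          = fun u => Fin.append (L₁.eval G χ₁ u) (L₂.eval G χ₂ u) :=
        funext fun u => splitLayer_eval L₁ L₂ h₁.1 h₂.1 G χ₁ χ₂ u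
      rw [hl, hMe]
      rfl

lemma zipShared {d r₁ r₂ : ℕ} (N₁ : MPNN d r₁) (N₂ : MPNN d r₂)
    (h₁ : N₁.AllReLU) (h₂ : N₂.AllReLU) (hn : N₁.numLayers = N₂.numLayers) :
    ∃ N : MPNN d (r₁+r₂), N.AllReLU ∧
      ∀ (G : FinGraph) (χ : Fin G.n → Fin d → ℝ) (v : Fin G.n),
        N.eval G χ v = Fin.append (N₁.eval G χ v) (N₂.eval G χ v) := by
  cases N₁ with
  | single L₁ =>
    cases N₂ with
    | single L₂ =>
      exact ⟨.single (stackLayer L₁ L₂), rfl, fun G χ v => stackLayer_eval L₁ L₂ h₁ h₂ G χ v⟩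
    | cons L₂ M₂ =>
      exfalso; have := M₂.one_le_numLayers; simp [MPNN.numLayers] at hn; omega
  | cons L₁ M₁ =>
    cases N₂ with
    | single L₂ =>
      exfalso; have := M₁.one_le_numLayers; simp [MPNN.numLayers] at hn; omega
    | cons L₂ M₂ =>
      obtain ⟨M, hM, hMe⟩ := zipSplit M₁ M₂ h₁.2 h₂.2 (by simp [MPNN.numLayers] at hn; omega)
      refine ⟨.cons (stackLayer L₁ L₂) M, ⟨rfl, hM⟩, ?_⟩
      intro G χ v
      show M.eval G ((stackLayer L₁ L₂).eval G χ) v = _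
      have hl : (stackLayer L₁ L₂).eval G χ
          = fun u => Fin.append (L₁.eval G χ u) (L₂.eval G χ u) :=
        funext fun u => stackLayer_eval L₁ L₂ h₁.1 h₂.1 G χ u
      rw [hl, hMe]
      rfl

/-- Values of MPLang expressions are uniformly bounded over degree-≤p graphs
and features in a compact set. -/
lemma eval_bound (p d : ℕ) (X : Set (Fin d → ℝ)) (hX : IsCompact X) (e : MPLang) :
    ∃ B : ℝ, 0 ≤ B ∧ ∀ (G : FinGraph), G.DegreeLE p → ∀ χ : Fin G.n → Fin d → ℝ,
      (∀ v, χ v ∈ X) → ∀ v, |MPLang.eval d e G χ v| ≤ B := by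
  induction e with
  | one => exact ⟨1, zero_le_one, fun G _ χ _ v => by simp [MPLang.eval]⟩
  | proj i =>
    obtain ⟨C, hC⟩ := hX.isBounded.exists_norm_le
    refine ⟨max C 0, le_max_right _ _, fun G _ χ hχ v => ?_⟩
    simp only [MPLang.eval]
    split
    · calc |χ v _| ≤ ‖χ v‖ := by
            rw [← Real.norm_eq_abs]; exact norm_le_pi_norm (χ v) _
        _ ≤ C := hC _ (hχ v)
        _ ≤ max C 0 := le_max_left _ _
    · simp
  | scale a e ih =>
    obtain ⟨B, hB0, hB⟩ := ih
    refine ⟨|a| * B, by positivity, fun G hG χ hχ v => ?_⟩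
    simp only [MPLang.eval, abs_mul]
    exact mul_le_mul_of_nonneg_left (hB G hG χ hχ v) (abs_nonneg a)
  | add e₁ e₂ ih₁ ih₂ =>
    obtain ⟨B₁, hB₁0, hB₁⟩ := ih₁
    obtain ⟨B₂, hB₂0, hB₂⟩ := ih₂
    refine ⟨B₁ + B₂, by linarith, fun G hG χ hχ v => ?_⟩
    simp only [MPLang.eval]
    exact (abs_add_le _ _).trans (add_le_add (hB₁ G hG χ hχ v) (hB₂ G hG χ hχ v))
  | app f hf e ih =>
    obtain ⟨B, hB0, hB⟩ := ih
    obtain ⟨C, hC⟩ := (isCompact_Icc (a := -B) (b := B)).exists_bound_of_continuousOn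
      hf.continuousOn
    refine ⟨max C 0, le_max_right _ _, fun G hG χ hχ v => ?_⟩
    simp only [MPLang.eval]
    have hx : MPLang.eval d e G χ v ∈ Set.Icc (-B) B := abs_le.mp (hB G hG χ hχ v)
    calc |f (MPLang.eval d e G χ v)| ≤ C := by
          rw [← Real.norm_eq_abs]; exact hC _ hx
      _ ≤ max C 0 := le_max_left _ _
  | diamond e ih =>
    obtain ⟨B, hB0, hB⟩ := ih
    refine ⟨p * B, by positivity, fun G hG χ hχ v => ?_⟩
    simp only [MPLang.eval]
    calc |∑ u ∈ G.neighbors v, MPLang.eval d e G χ u|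
        ≤ ∑ u ∈ G.neighbors v, |MPLang.eval d e G χ u| := Finset.abs_sum_le_sum_abs _ _
      _ ≤ (G.neighbors v).card • B :=
          Finset.sum_le_card_nsmul _ _ B (fun u _ => hB G hG χ hχ u)
      _ = (G.neighbors v).card * B := nsmul_eq_mul _ _
      _ ≤ p * B := by
          have := hG v
          rw [FinGraph.degree] at this
          exact mul_le_mul_of_nonneg_right (by exact_mod_cast this) hB0

/-- the (ReLU,ReLU) output pair layer computing `(ReLU z, ReLU (-z))` for
`z = ⟨w, χ v⟩ + ⟨w₂, Σ_{u∈N(v)} χ u⟩ + c`. -/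
noncomputable def outLayer {m : ℕ} (w w₂ : Fin m → ℝ) (c : ℝ) : Layer m 2 where
  W₁ := Matrix.of fun i j => if i = 0 then w j else -(w j)
  W₂ := Matrix.of fun i j => if i = 0 then w₂ j else -(w₂ j)
  b := fun i => if i = 0 then c else -c
  σ := ReLU
  hσ := continuous_relu

lemma outLayer_diff {m : ℕ} (w w₂ : Fin m → ℝ) (c : ℝ) (G : FinGraph)
    (χ : Fin G.n → Fin m → ℝ) (v : Fin G.n) :
    (outLayer w w₂ c).eval G χ v 0 - (outLayer w w₂ c).eval G χ v 1
      = (∑ j, w j * χ v j) + (∑ j, w₂ j * ∑ u ∈ G.neighbors v, χ u j) + c := by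
  have h0 : (outLayer w w₂ c).eval G χ v 0
      = ReLU ((∑ j, w j * χ v j) + (∑ j, w₂ j * ∑ u ∈ G.neighbors v, χ u j) + c) := by
    simp [outLayer, Layer.eval, Matrix.mulVec, dotProduct, Finset.sum_apply]
  have h1 : (outLayer w w₂ c).eval G χ v 1
      = ReLU (-((∑ j, w j * χ v j) + (∑ j, w₂ j * ∑ u ∈ G.neighbors v, χ u j) + c)) := by
    have h10 : (1 : Fin 2) ≠ 0 := by decide
    simp only [outLayer, Layer.eval, Matrix.mulVec, dotProduct, Matrix.of_apply,
      if_neg h10]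
    congr 1
    simp only [Finset.sum_apply, neg_mul, Finset.sum_neg_distrib]
    ring
  rw [h0, h1, relu_sub_relu_neg]

lemma approx_core (p d : ℕ) (X : Set (Fin d → ℝ)) (hX : IsCompact X) (e : MPLang)
    (he : e.Appropriate d) (δ : ℝ) (hδ : 0 < δ) :
    ∃ N : MPNN d 2, N.AllReLU ∧ ∀ (G : FinGraph), G.DegreeLE p →
      ∀ χ : Fin G.n → Fin d → ℝ, (∀ v, χ v ∈ X) → ∀ v : Fin G.n,
        |MPLang.eval d e G χ v - (N.eval G χ v 0 - N.eval G χ v 1)| ≤ δ := by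
  induction e generalizing δ with
  | one =>
    refine ⟨.single (outLayer 0 0 1), rfl, fun G _ χ _ v => ?_⟩
    have hd := outLayer_diff (0 : Fin d → ℝ) 0 1 G χ v
    show |MPLang.eval d .one G χ v - ((outLayer (0 : Fin d → ℝ) 0 1).eval G χ v 0 -
      (outLayer (0 : Fin d → ℝ) 0 1).eval G χ v 1)| ≤ δ
    rw [hd]
    simp only [MPLang.eval, Pi.zero_apply, zero_mul, Finset.sum_const_zero, zero_add]
    norm_num
    linarith
  | proj i =>
    have h : i - 1 < d := by
      have h2 : 1 ≤ i ∧ i ≤ d := he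
      omega
    set w : Fin d → ℝ := fun j => if j = ⟨i-1, h⟩ then 1 else 0 with hw
    refine ⟨.single (outLayer w 0 0), rfl, fun G _ χ _ v => ?_⟩
    have hd := outLayer_diff w 0 0 G χ v
    show |MPLang.eval d (.proj i) G χ v - ((outLayer w 0 0).eval G χ v 0 -
      (outLayer w 0 0).eval G χ v 1)| ≤ δ
    rw [hd]
    simp only [MPLang.eval, hw, Pi.zero_apply, zero_mul, Finset.sum_const_zero, add_zero,
      ite_mul, one_mul, zero_mul, Finset.sum_ite_eq', Finset.mem_univ, if_true, dif_pos h]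
    norm_num
    linarith
  | scale a e ih =>
    obtain ⟨N, hN, hNe⟩ := ih he (δ/(|a|+1)) (by positivity)
    refine ⟨N.snoc (outLayer ![a, -a] 0 0), N.allReLU_snoc _ hN rfl, fun G hG χ hχ v => ?_⟩
    rw [MPNN.eval_snoc]
    have hd := outLayer_diff ![a, -a] 0 0 G (N.eval G χ) v
    rw [hd]
    have herr := hNe G hG χ hχ v
    simp only [MPLang.eval, Pi.zero_apply, zero_mul, Finset.sum_const_zero, add_zero,
      Fin.sum_univ_two, Matrix.cons_val_zero, Matrix.cons_val_one, Matrix.head_cons]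
    have hkey : a * MPLang.eval d e G χ v - (a * N.eval G χ v 0 + -a * N.eval G χ v 1)
        = a * (MPLang.eval d e G χ v - (N.eval G χ v 0 - N.eval G χ v 1)) := by ring
    rw [hkey, abs_mul]
    have h1 : |a| * |MPLang.eval d e G χ v - (N.eval G χ v 0 - N.eval G χ v 1)|
        ≤ |a| * (δ/(|a|+1)) := mul_le_mul_of_nonneg_left herr (abs_nonneg a)
    have h2 : |a| * (δ/(|a|+1)) ≤ δ := by
      rw [mul_div_assoc']  -- (|a| * δ)/(|a|+1) ≤ δ
      rw [div_le_iff₀ (by positivity)]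
      nlinarith [abs_nonneg a]
    linarith
  | add e₁ e₂ ih₁ ih₂ =>
    obtain ⟨N₁, hN₁, hNe₁⟩ := ih₁ he.1 (δ/2) (by linarith)
    obtain ⟨N₂, hN₂, hNe₂⟩ := ih₂ he.2 (δ/2) (by linarith)
    obtain ⟨N₁', h₁', hn₁', he₁'⟩ :=
      N₁.pad hN₁ (max N₁.numLayers N₂.numLayers) (le_max_left _ _)
    obtain ⟨N₂', h₂', hn₂', he₂'⟩ :=
      N₂.pad hN₂ (max N₁.numLayers N₂.numLayers) (le_max_right _ _)
    obtain ⟨M, hM, hMe⟩ := zipShared N₁' N₂' h₁' h₂' (hn₁'.trans hn₂'.symm)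
    set w : Fin (2+2) → ℝ := Fin.append ![(1:ℝ),-1] ![(1:ℝ),-1] with hw
    refine ⟨M.snoc (outLayer w 0 0), M.allReLU_snoc _ hM rfl, fun G hG χ hχ v => ?_⟩
    rw [MPNN.eval_snoc]
    have hd := outLayer_diff w 0 0 G (M.eval G χ) v
    rw [hd]
    have hMv : ∀ u, M.eval G χ u = Fin.append (N₁.eval G χ u) (N₂.eval G χ u) := by
      intro u
      rw [hMe G χ u, he₁' G χ, he₂' G χ]
    have hsum : (∑ j, w j * M.eval G χ v j)
        = (N₁.eval G χ v 0 - N₁.eval G χ v 1) + (N₂.eval G χ v 0 - N₂.eval G χ v 1) := by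
      rw [hMv v, hw, Fin.sum_univ_add]
      simp only [Fin.append_left, Fin.append_right, Fin.sum_univ_two,
        Matrix.cons_val_zero, Matrix.cons_val_one, Matrix.head_cons]
      ring
    rw [hsum]
    have h1 := hNe₁ G hG χ hχ v
    have h2 := hNe₂ G hG χ hχ v
    simp only [MPLang.eval, Pi.zero_apply, zero_mul, Finset.sum_const_zero, add_zero]
    have hkey : MPLang.eval d e₁ G χ v + MPLang.eval d e₂ G χ v -
        ((N₁.eval G χ v 0 - N₁.eval G χ v 1) + (N₂.eval G χ v 0 - N₂.eval G χ v 1))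
        = (MPLang.eval d e₁ G χ v - (N₁.eval G χ v 0 - N₁.eval G χ v 1)) +
          (MPLang.eval d e₂ G χ v - (N₂.eval G χ v 0 - N₂.eval G χ v 1)) := by ring
    rw [hkey]
    exact (abs_add_le _ _).trans (by linarith)
  | app f hf e ih =>
    obtain ⟨B, hB0, hBd⟩ := eval_bound p d X hX e
    obtain ⟨θ, hθ0, hθ⟩ := Metric.uniformContinuousOn_iff.mp
      ((isCompact_Icc (a := -(B+1)) (b := B+1)).uniformContinuousOn_of_continuous
        hf.continuousOn) (δ/2) (by linarith)
    set δ₀ : ℝ := min 1 (θ/2) with hδ₀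
    have hδ₀0 : 0 < δ₀ := lt_min one_pos (by linarith)
    obtain ⟨N, hN, hNe⟩ := ih he δ₀ hδ₀0
    obtain ⟨m, c, a, tt, hg⟩ := pl_approx f hf (B+1) (by linarith) (δ/2) (by linarith)
    set L₁ : Layer 2 m := ⟨Matrix.of fun _ j => if j = 0 then 1 else -1, 0,
      fun i => -(tt i), ReLU, continuous_relu⟩ with hL₁
    refine ⟨(N.snoc L₁).snoc (outLayer a 0 c),
      MPNN.allReLU_snoc _ _ (N.allReLU_snoc _ hN rfl) rfl, fun G hG χ hχ v => ?_⟩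
    rw [MPNN.eval_snoc, MPNN.eval_snoc]
    set y0 := N.eval G χ v 0 with hy0
    set y1 := N.eval G χ v 1 with hy1
    set x := y0 - y1 with hx
    have hL₁e : ∀ i, L₁.eval G (N.eval G χ) v i = ReLU (x - tt i) := by
      intro i
      have h10 : (1 : Fin 2) ≠ 0 := by decide
      simp only [hL₁, Layer.eval, Matrix.mulVec, dotProduct, Matrix.of_apply,
        Matrix.zero_apply, zero_mul, Finset.sum_const_zero, add_zero, Fin.sum_univ_two,
        if_pos rfl, if_neg h10, ← hy0, ← hy1]
      congr 1
      simp only [if_true]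
      rw [hx]
      ring
    have hd := outLayer_diff a 0 c G (L₁.eval G (N.eval G χ)) v
    rw [hd]
    have hsum : (∑ j, a j * L₁.eval G (N.eval G χ) v j) = ∑ j, a j * ReLU (x - tt j) := by
      refine Finset.sum_congr rfl fun j _ => ?_
      rw [hL₁e]
    have herr := hNe G hG χ hχ v
    have hev : |MPLang.eval d e G χ v| ≤ B := hBd G hG χ hχ v
    rw [abs_le] at hev
    have herr' := abs_le.mp herr
    have hδ₀1 : δ₀ ≤ 1 := min_le_left _ _
    have hevI : MPLang.eval d e G χ v ∈ Set.Icc (-(B+1)) (B+1) := by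
      constructor <;> [linarith [hev.1]; linarith [hev.2]]
    have hxI : x ∈ Set.Icc (-(B+1)) (B+1) := by
      constructor
      · linarith [hev.1, herr'.2]
      · linarith [hev.2, herr'.1]
    have h1 : |f (MPLang.eval d e G χ v) - f x| ≤ δ/2 := by
      have hdist : dist (MPLang.eval d e G χ v) x < θ := by
        rw [Real.dist_eq]
        have hm : δ₀ ≤ θ/2 := min_le_right _ _
        rw [abs_lt]
        constructor <;> [linarith [herr'.2]; linarith [herr'.1]]
      have := hθ _ hevI _ hxI hdist
      rw [Real.dist_eq] at this
      linarith
    have h2 : |f x - (c + ∑ j, a j * ReLU (x - tt j))| ≤ δ/2 := hg x hxI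
    simp only [MPLang.eval, Pi.zero_apply, zero_mul, Finset.sum_const_zero, add_zero]
    rw [hsum]
    have hcomm : (∑ j, a j * ReLU (x - tt j)) + c = c + ∑ j, a j * ReLU (x - tt j) :=
      add_comm _ _
    rw [hcomm]
    calc |f (MPLang.eval d e G χ v) - (c + ∑ j, a j * ReLU (x - tt j))|
        ≤ |f (MPLang.eval d e G χ v) - f x| + |f x - (c + ∑ j, a j * ReLU (x - tt j))| :=
          abs_sub_le _ _ _
      _ ≤ δ := by linarith
  | diamond e ih =>
    obtain ⟨N, hN, hNe⟩ := ih he (δ/(p+1)) (by positivity)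
    refine ⟨N.snoc (outLayer 0 ![(1:ℝ),-1] 0), N.allReLU_snoc _ hN rfl, fun G hG χ hχ v => ?_⟩
    rw [MPNN.eval_snoc]
    have hd := outLayer_diff (0 : Fin 2 → ℝ) ![(1:ℝ),-1] 0 G (N.eval G χ) v
    rw [hd]
    simp only [MPLang.eval, Pi.zero_apply, zero_mul, Finset.sum_const_zero, zero_add, add_zero,
      Fin.sum_univ_two, Matrix.cons_val_zero, Matrix.cons_val_one, Matrix.head_cons,
      Finset.sum_apply, one_mul, neg_one_mul]
    have hkey : (∑ u ∈ G.neighbors v, MPLang.eval d e G χ u) -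
        ((∑ u ∈ G.neighbors v, N.eval G χ u 0) + -(∑ u ∈ G.neighbors v, N.eval G χ u 1))
        = ∑ u ∈ G.neighbors v,
            (MPLang.eval d e G χ u - (N.eval G χ u 0 - N.eval G χ u 1)) := by
      rw [Finset.sum_sub_distrib, Finset.sum_sub_distrib]
      ring
    rw [hkey]
    calc |∑ u ∈ G.neighbors v, (MPLang.eval d e G χ u - (N.eval G χ u 0 - N.eval G χ u 1))|
        ≤ ∑ u ∈ G.neighbors v,
            |MPLang.eval d e G χ u - (N.eval G χ u 0 - N.eval G χ u 1)| :=
          Finset.abs_sum_le_sum_abs _ _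
      _ ≤ (G.neighbors v).card • (δ/(p+1)) :=
          Finset.sum_le_card_nsmul _ _ _ (fun u _ => hNe G hG χ hχ u)
      _ = (G.neighbors v).card * (δ/(p+1)) := nsmul_eq_mul _ _
      _ ≤ p * (δ/(p+1)) := by
          have := hG v
          rw [FinGraph.degree] at this
          have hc : ((G.neighbors v).card : ℝ) ≤ p := by exact_mod_cast this
          exact mul_le_mul_of_nonneg_right hc (by positivity)
      _ ≤ δ := by
          rw [mul_div_assoc']
          rw [div_le_iff₀ (by positivity)]
          nlinarith

/-- over graphs of degree at most `p` and feature maps with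
values in a compact set `X`, every MPLang expression can be uniformly
approximated by a ReLU-MPNN. -/
theorem mplang_approx_by_relu_mpnn (p d : ℕ) (X : Set (Fin d → ℝ))
    (hX : IsCompact X) (e : MPLang) (he : e.Appropriate d)
    (ε : ℝ) (hε : 0 < ε) :
    ∃ N : MPNN d 1, N.IsReLU ∧
      ∀ (G : FinGraph), G.DegreeLE p →
        ∀ χ : Fin G.n → Fin d → ℝ, (∀ v, χ v ∈ X) →
          ∀ v : Fin G.n, |e.eval d G χ v - N.eval G χ v 0| ≤ ε := by
  obtain ⟨N, hN, hNe⟩ := approx_core p d X hX e he ε hε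
  set L : Layer 2 1 := ⟨Matrix.of fun _ j => if j = 0 then 1 else -1, 0, 0, id,
    continuous_id⟩ with hL
  refine ⟨N.snoc L, N.isReLU_snoc L hN (Or.inr rfl), fun G hG χ hχ v => ?_⟩
  rw [MPNN.eval_snoc]
  have hout : L.eval G (N.eval G χ) v 0 = N.eval G χ v 0 - N.eval G χ v 1 := by
    have h10 : (1 : Fin 2) ≠ 0 := by decide
    simp only [hL, Layer.eval, Matrix.mulVec, dotProduct, Matrix.of_apply,
      Matrix.zero_apply, zero_mul, Finset.sum_const_zero, add_zero, Fin.sum_univ_two,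
      if_pos rfl, if_neg h10, if_true, id_eq, Pi.zero_apply]
    ring
  rw [hout]
  exact hNe G hG χ hχ v
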